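/- In an SP-structure satisfying Symmetry, Non-negativity, Boundedness, and O-Projection, if x is a state and A an ortho-set with p(x,A) > 0, then there exists a state y with p(y,A) = 1 and p(x,y) = p(x,A). -/

import Mathlib

variable {Ω : Type*}

def IsOrtho (p : Ω → Ω → ℝ) (A : Set Ω) : Prop :=
  ∀ x ∈ A, ∀ y ∈ A, x ≠ y → p x y = 0

noncomputable def pSet (p : Ω → Ω → ℝ) (x : Ω) (A : Set Ω) : ℝ :=
  ∑' a : A, p x a

def Symm (p : Ω → Ω → ℝ) : Prop := ∀ x y, p x y = p y x

def Nonneg (p : Ω → Ω → ℝ) : Prop := ∀ x y, 0 ≤ p x y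

def Bounded (p : Ω → Ω → ℝ) : Prop :=
  ∀ (x : Ω) (A : Set Ω), IsOrtho p A →
    Summable (fun a : A => p x a) ∧ pSet p x A ≤ 1

def OProj (p : Ω → Ω → ℝ) : Prop :=
  ∀ (x : Ω) (A : Set Ω), IsOrtho p A → pSet p x A < 1 →
    ∃ y, pSet p y A = 0 ∧ pSet p x A + p x y = 1

def Factor (p : Ω → Ω → ℝ) : Prop :=
  ∀ (x y z : Ω) (A : Set Ω), IsOrtho p A → pSet p y A = 1 → pSet p z A = 1 →
    p x y = pSet p x A → p x z = p x y * p y z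

def Subgen (p : Ω → Ω → ℝ) (A : Set Ω) : Set Ω := {x | pSet p x A = 1}

def IsSubspace (p : Ω → Ω → ℝ) (X : Set Ω) : Prop :=
  ∃ A, IsOrtho p A ∧ X = Subgen p A

def Standard (p : Ω → Ω → ℝ) : Prop := ∀ x y, p x y = 1 → x = y

/-! ### Auxiliary lemmas -/

lemma pSet_singleton' (p : Ω → Ω → ℝ) (z a : Ω) : pSet p z {a} = p z a := by
  simp only [pSet]; exact tsum_singleton a (fun b => p z b)

lemma isOrtho_singleton' (p : Ω → Ω → ℝ) (a : Ω) : IsOrtho p {a} := by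
  intro u hu v hv huv
  rcases hu with rfl
  rcases hv with rfl
  exact absurd rfl huv

/-- Every state has self-transition probability 1. -/
lemma self_one' (p : Ω → Ω → ℝ) (h1 : Symm p) (h3 : Bounded p) (h4 : OProj p) (a : Ω) :
    p a a = 1 := by
  have hOrth := isOrtho_singleton' p a
  have hle : pSet p a {a} ≤ 1 := (h3 a {a} hOrth).2
  by_contra hne
  have hne' : pSet p a {a} ≠ 1 := by rw [pSet_singleton']; exact hne
  obtain ⟨z, hz0, hz1⟩ := h4 a {a} hOrth (lt_of_le_of_ne hle hne')
  rw [pSet_singleton'] at hz0 hz1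
  rw [h1 a z, hz0, add_zero] at hz1
  exact hne hz1

/-- From a vanishing (nonnegative, summable) total transition probability,
    each term vanishes. -/
lemma term_zero' (p : Ω → Ω → ℝ) (h2 : Nonneg p) {x : Ω} {A : Set Ω}
    (hsum : Summable (fun a : A => p x a)) (h0 : pSet p x A = 0) :
    ∀ a ∈ A, p x a = 0 := by
  intro a ha
  have hle : p x a ≤ pSet p x A :=
    Summable.le_tsum hsum (⟨a, ha⟩ : A) (fun j _ => h2 x j)
  have := h2 x a
  rw [h0] at hle
  linarith

/-- On a maximal ortho-set, every state has total transition probability 1. -/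
lemma pSet_maximal_one' (p : Ω → Ω → ℝ) (h1 : Symm p) (h2 : Nonneg p) (h3 : Bounded p)
    (h4 : OProj p) {M : Set Ω} (hMax : Maximal (fun B => IsOrtho p B) M) (s : Ω) :
    pSet p s M = 1 := by
  have hM : IsOrtho p M := hMax.1
  have hle : pSet p s M ≤ 1 := (h3 s M hM).2
  rcases eq_or_lt_of_le hle with h | hlt
  · exact h
  · exfalso
    obtain ⟨t, ht0, _⟩ := h4 s M hM hlt
    have htm : ∀ m ∈ M, p t m = 0 := term_zero' p h2 (h3 t M hM).1 ht0
    have htM : t ∉ M := by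
      intro htin
      have := htm t htin
      rw [self_one' p h1 h3 h4 t] at this
      norm_num at this
    have hOrth : IsOrtho p (insert t M) := by
      intro u hu v hv huv
      rcases hu with rfl | hu
      · rcases hv with rfl | hv
        · exact absurd rfl huv
        · exact htm v hv
      · rcases hv with rfl | hv
        · rw [h1]; exact htm u hu
        · exact hM u hu v hv huv
    exact htM (hMax.2 hOrth (Set.subset_insert t M) (Set.mem_insert t M))

/-- Existence of a maximal ortho-set containing a given ortho-set. -/
lemma exists_maximal_ortho' (p : Ω → Ω → ℝ) {A : Set Ω} (hA : IsOrtho p A) :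
    ∃ M, A ⊆ M ∧ Maximal (fun B => IsOrtho p B) M := by
  have := zorn_subset_nonempty {B : Set Ω | IsOrtho p B} ?_ A hA
  · obtain ⟨M, hAM, hMax⟩ := this
    exact ⟨M, hAM, hMax⟩
  · intro c hcS hchain _
    refine ⟨⋃₀ c, ?_, fun s hs => Set.subset_sUnion_of_mem hs⟩
    intro u hu v hv huv
    obtain ⟨B1, hB1, hu1⟩ := hu
    obtain ⟨B2, hB2, hv2⟩ := hv
    rcases hchain.total hB1 hB2 with h | h
    · exact hcS hB2 u (h hu1) v hv2 huv
    · exact hcS hB1 u hu1 v (h hv2) huv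

lemma pSet_split' (p : Ω → Ω → ℝ) (h3 : Bounded p) {A M : Set Ω} (hAM : A ⊆ M)
    (hA : IsOrtho p A) (hA' : IsOrtho p (M \ A)) (s : Ω) :
    pSet p s M = pSet p s A + pSet p s (M \ A) := by
  have hs1 : Summable ((fun a => p s a) ∘ ((↑) : A → Ω)) := (h3 s A hA).1
  have hs2 : Summable ((fun a => p s a) ∘ ((↑) : (M \ A : Set Ω) → Ω)) := (h3 s (M \ A) hA').1
  have := Summable.tsum_union_disjoint (f := fun a => p s a) Set.disjoint_sdiff_right hs1 hs2
  rw [Set.union_diff_cancel hAM] at this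
  exact this

theorem stmt6 (p : Ω → Ω → ℝ) (h1 : Symm p) (h2 : Nonneg p) (h3 : Bounded p)
    (h4 : OProj p) (x : Ω) (A : Set Ω) (hA : IsOrtho p A)
    (hpos : 0 < pSet p x A) :
    ∃ y : Ω, pSet p y A = 1 ∧ p x y = pSet p x A := by
  obtain ⟨M, hAM, hMax⟩ := exists_maximal_ortho' p hA
  have hM : IsOrtho p M := hMax.1
  have hA' : IsOrtho p (M \ A) := fun u hu v hv huv => hM u hu.1 v hv.1 huv
  have honeX : pSet p x M = 1 := pSet_maximal_one' p h1 h2 h3 h4 hMax x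
  have hsplitX : pSet p x M = pSet p x A + pSet p x (M \ A) := pSet_split' p h3 hAM hA hA' x
  have hlt : pSet p x (M \ A) < 1 := by linarith
  obtain ⟨y, hy0, hy1⟩ := h4 x (M \ A) hA' hlt
  have honeY : pSet p y M = 1 := pSet_maximal_one' p h1 h2 h3 h4 hMax y
  have hsplitY : pSet p y M = pSet p y A + pSet p y (M \ A) := pSet_split' p h3 hAM hA hA' y
  refine ⟨y, ?_, ?_⟩
  · rw [hy0, add_zero] at hsplitY
    linarith
  · linarith
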